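/- Suppose the k-dimensional random vector Z satisfies Assumption (A), let τ ∈ (0,1), u ∈ S^{k−1}, and let (a_τ, b_τ) be the unique minimizer of Ψ_{τu}(a,b) := E[ρ_τ(u'Z − b'Γ_u'Z − a)] over ℝ × ℝ^{k−1}. Then the lower quantile halfspace H^−_τ := {z ∈ ℝ^k : u'z < b_τ'Γ_u'z + a_τ} satisfies P[Z ∈ H^−_τ] = τ. -/

import Mathlib

open MeasureTheory Matrix ENNReal Filter Pointwise

/-- The quantile check function `ρ_τ`. -/
noncomputable def rho (τ x : ℝ) : ℝ := x * (τ - if x < 0 then 1 else 0)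

/-- Assumption (A): absolutely continuous distribution with a density whose support is
connected, and finite first-order moments. -/
def AssumptionA {k : ℕ} (μ : Measure (Fin (k + 1) → ℝ)) : Prop :=
  IsProbabilityMeasure μ ∧
    (∃ f : (Fin (k + 1) → ℝ) → ℝ, Measurable f ∧ (∀ z, 0 ≤ f z) ∧
      μ = volume.withDensity (fun z => ENNReal.ofReal (f z)) ∧
      IsConnected (Function.support f)) ∧
    Integrable (fun z : Fin (k + 1) → ℝ => z) μ

/-- The objective function `Ψ_{τu}(a, b) = E[ρ_τ(u'Z − b'Γ_u'Z − a)]`. -/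
noncomputable def Psi {k : ℕ} (μ : Measure (Fin (k + 1) → ℝ)) (τ : ℝ)
    (u : Fin (k + 1) → ℝ) (Γ : Matrix (Fin (k + 1)) (Fin k) ℝ)
    (a : ℝ) (b : Fin k → ℝ) : ℝ :=
  ∫ z, rho τ (u ⬝ᵥ z - b ⬝ᵥ (Γᵀ *ᵥ z) - a) ∂μ

-- Auxiliary lemmas

lemma rho_eq_of_nonneg {τ x : ℝ} (hx : 0 ≤ x) : rho τ x = x * τ := by
  simp [rho, not_lt.2 hx]

lemma rho_eq_of_nonpos {τ x : ℝ} (hx : x ≤ 0) : rho τ x = x * (τ - 1) := by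
  rcases eq_or_lt_of_le hx with h | h
  · simp [rho, ← h]
  · simp [rho, h]

lemma rho_abs_sub_le {τ : ℝ} (h0 : 0 ≤ τ) (h1 : τ ≤ 1) (x y : ℝ) :
    |rho τ x - rho τ y| ≤ |x - y| := by
  unfold rho
  rw [abs_le]
  constructor <;>
  · split_ifs <;>
      nlinarith [le_abs_self (x - y), neg_abs_le (x - y), abs_nonneg (x - y)]

lemma hseq_tendsto : Tendsto (fun n : ℕ => ((n:ℝ)+1)⁻¹) atTop (nhds 0) := by
  simpa [one_div] using (tendsto_one_div_add_atTop_nhds_zero_nat :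
    Tendsto (fun n : ℕ => 1 / ((n:ℝ)+1)) atTop (nhds 0))

lemma tendsto_right (τ y : ℝ) :
    Tendsto (fun n : ℕ => (rho τ (y - ((n:ℝ)+1)⁻¹) - rho τ y) * ((n:ℝ)+1))
      atTop (nhds ((if y ≤ 0 then (1:ℝ) else 0) - τ)) := by
  by_cases hy : y ≤ 0
  · rw [if_pos hy]
    refine (tendsto_const_nhds (x := (1:ℝ) - τ)).congr fun n => ?_
    have hn : (0:ℝ) < ((n:ℝ)+1)⁻¹ := by positivity
    have hmul : ((n:ℝ)+1)⁻¹ * ((n:ℝ)+1) = 1 := inv_mul_cancel₀ (by positivity)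
    rw [rho_eq_of_nonpos (by linarith : y - ((n:ℝ)+1)⁻¹ ≤ 0), rho_eq_of_nonpos hy]
    linear_combination (τ - 1) * hmul
  · push_neg at hy
    rw [if_neg (not_le.2 hy)]
    have hev : ∀ᶠ n : ℕ in atTop, ((n:ℝ)+1)⁻¹ < y :=
      hseq_tendsto.eventually_lt_const hy
    refine (tendsto_const_nhds (x := (0:ℝ) - τ)).congr' ?_
    filter_upwards [hev] with n hn
    have hmul : ((n:ℝ)+1)⁻¹ * ((n:ℝ)+1) = 1 := inv_mul_cancel₀ (by positivity)
    rw [rho_eq_of_nonneg (by linarith : (0:ℝ) ≤ y - ((n:ℝ)+1)⁻¹),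
      rho_eq_of_nonneg hy.le]
    linear_combination τ * hmul

lemma tendsto_left (τ y : ℝ) :
    Tendsto (fun n : ℕ => (rho τ (y + ((n:ℝ)+1)⁻¹) - rho τ y) * ((n:ℝ)+1))
      atTop (nhds (τ - (if y < 0 then (1:ℝ) else 0))) := by
  by_cases hy : y < 0
  · rw [if_pos hy]
    have hev : ∀ᶠ n : ℕ in atTop, ((n:ℝ)+1)⁻¹ < -y :=
      hseq_tendsto.eventually_lt_const (by linarith)
    refine (tendsto_const_nhds (x := τ - (1:ℝ))).congr' ?_
    filter_upwards [hev] with n hn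
    have hmul : ((n:ℝ)+1)⁻¹ * ((n:ℝ)+1) = 1 := inv_mul_cancel₀ (by positivity)
    rw [rho_eq_of_nonpos (by linarith : y + ((n:ℝ)+1)⁻¹ ≤ 0), rho_eq_of_nonpos hy.le]
    linear_combination (1 - τ) * hmul
  · push_neg at hy
    rw [if_neg (not_lt.2 hy)]
    refine (tendsto_const_nhds (x := τ - (0:ℝ))).congr fun n => ?_
    have hn : (0:ℝ) < ((n:ℝ)+1)⁻¹ := by positivity
    have hmul : ((n:ℝ)+1)⁻¹ * ((n:ℝ)+1) = 1 := inv_mul_cancel₀ (by positivity)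
    rw [rho_eq_of_nonneg (by linarith : (0:ℝ) ≤ y + ((n:ℝ)+1)⁻¹), rho_eq_of_nonneg hy]
    linear_combination (-τ) * hmul

theorem stmt3 {k : ℕ} (μ : Measure (Fin (k + 1) → ℝ))
    (hA : AssumptionA μ) (τ : ℝ) (hτ : τ ∈ Set.Ioo (0:ℝ) 1)
    (u : Fin (k + 1) → ℝ) (hu : ∑ i, u i ^ 2 = 1)
    (Γ : Matrix (Fin (k + 1)) (Fin k) ℝ) (hΓ : Γᵀ * Γ = 1) (hΓu : Γᵀ *ᵥ u = 0)
    (a : ℝ) (b : Fin k → ℝ)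
    (hmin : ∀ a' : ℝ, ∀ b' : Fin k → ℝ, Psi μ τ u Γ a b ≤ Psi μ τ u Γ a' b') :
    (μ {z | u ⬝ᵥ z < b ⬝ᵥ (Γᵀ *ᵥ z) + a}).toReal = τ := by
  obtain ⟨hprob, ⟨f, hfmeas, hfnn, hμ, hconn⟩, hintZ⟩ := hA
  obtain ⟨hτ0, hτ1⟩ := hτ
  haveI := hprob
  set X : (Fin (k+1) → ℝ) → ℝ := fun z => u ⬝ᵥ z - b ⬝ᵥ (Γᵀ *ᵥ z) with hXdef
  set c : Fin (k+1) → ℝ := u - Γ *ᵥ b with hcdef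
  have hXc : ∀ z, X z = c ⬝ᵥ z := by
    intro z
    simp [hXdef, hcdef, sub_dotProduct, dotProduct_mulVec, vecMul_transpose]
  have hX : Measurable X := by
    have h1 : Measurable fun z : Fin (k+1) → ℝ => ∑ i, c i * z i :=
      Finset.measurable_sum _ fun i _ => by fun_prop
    exact (funext fun z => (hXc z) : X = _) ▸ h1
  have hXint : Integrable X μ := by
    have h1 : ∀ i, Integrable (fun z : Fin (k+1) → ℝ => z i) μ := fun i =>
      (ContinuousLinearMap.proj i : (Fin (k+1) → ℝ) →L[ℝ] ℝ).integrable_comp hintZ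
    have h2 : Integrable (fun z : Fin (k+1) → ℝ => ∑ i, c i * z i) μ :=
      integrable_finset_sum _ fun i _ => (h1 i).const_mul (c i)
    exact h2.congr (ae_of_all _ fun z => ((hXc z).trans rfl).symm)
  have hrhoM : Measurable (rho τ) := by
    unfold rho
    exact measurable_id.mul (measurable_const.sub
      (Measurable.ite (measurableSet_lt measurable_id measurable_const)
        measurable_const measurable_const))
  have habs : ∀ x : ℝ, |rho τ x| ≤ |x| := by
    intro x
    simpa [rho] using rho_abs_sub_le hτ0.le hτ1.le x 0
  have hint : ∀ a' : ℝ, Integrable (fun z => rho τ (X z - a')) μ := by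
    intro a'
    refine ((hXint.sub (integrable_const a')).abs).mono'
      ((hrhoM.comp (hX.sub measurable_const)).aestronglyMeasurable) ?_
    filter_upwards with z
    simpa [Real.norm_eq_abs] using habs (X z - a')
  have hmono : ∀ a' : ℝ, ∫ z, rho τ (X z - a) ∂μ ≤ ∫ z, rho τ (X z - a') ∂μ :=
    fun a' => hmin a' b
  have hsle : MeasurableSet {z | X z ≤ a} := measurableSet_le hX measurable_const
  have hslt : MeasurableSet {z | X z < a} := measurableSet_lt hX measurable_const
  have key1 : τ ≤ (μ {z | X z ≤ a}).toReal := by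
    have hlim : Tendsto
        (fun n : ℕ => ∫ z, (rho τ (X z - a - ((n:ℝ)+1)⁻¹) - rho τ (X z - a)) * ((n:ℝ)+1) ∂μ)
        atTop (nhds (∫ z, ((if X z - a ≤ 0 then (1:ℝ) else 0) - τ) ∂μ)) := by
      refine tendsto_integral_of_dominated_convergence (fun _ => 1) ?_ (integrable_const 1) ?_ ?_
      · intro n
        exact (((hrhoM.comp ((hX.sub measurable_const).sub measurable_const)).sub
          (hrhoM.comp (hX.sub measurable_const))).mul_const _).aestronglyMeasurable
      · intro n
        filter_upwards with z
        have hb := rho_abs_sub_le hτ0.le hτ1.le (X z - a - ((n:ℝ)+1)⁻¹) (X z - a)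
        have he : |X z - a - ((n:ℝ)+1)⁻¹ - (X z - a)| = ((n:ℝ)+1)⁻¹ := by
          rw [show X z - a - ((n:ℝ)+1)⁻¹ - (X z - a) = -(((n:ℝ)+1)⁻¹) by ring,
            abs_neg, abs_of_pos (by positivity)]
        rw [he] at hb
        rw [Real.norm_eq_abs, abs_mul, abs_of_pos (show (0:ℝ) < (n:ℝ)+1 by positivity)]
        calc |rho τ (X z - a - ((n:ℝ)+1)⁻¹) - rho τ (X z - a)| * ((n:ℝ)+1)
            ≤ ((n:ℝ)+1)⁻¹ * ((n:ℝ)+1) := by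
              exact mul_le_mul_of_nonneg_right hb (by positivity)
          _ = 1 := inv_mul_cancel₀ (by positivity)
      · filter_upwards with z
        exact tendsto_right τ (X z - a)
    have hindicator : (fun z => (if X z - a ≤ 0 then (1:ℝ) else 0) - τ)
        = fun z => Set.indicator {z | X z ≤ a} (fun _ => (1:ℝ)) z - τ := by
      funext z
      simp [Set.indicator_apply, Set.mem_setOf_eq, sub_nonpos]
    have hval : ∫ z, ((if X z - a ≤ 0 then (1:ℝ) else 0) - τ) ∂μ
        = (μ {z | X z ≤ a}).toReal - τ := by
      rw [hindicator, integral_sub ((integrable_const (1:ℝ)).indicator hsle)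
        (integrable_const τ), integral_indicator_const (1:ℝ) hsle, integral_const]
      simp [Measure.real]
    have hnonneg : ∀ n : ℕ,
        0 ≤ ∫ z, (rho τ (X z - a - ((n:ℝ)+1)⁻¹) - rho τ (X z - a)) * ((n:ℝ)+1) ∂μ := by
      intro n
      have hint' : Integrable (fun z => rho τ (X z - a - ((n:ℝ)+1)⁻¹)) μ := by
        have := hint (a + ((n:ℝ)+1)⁻¹)
        simpa [sub_add_eq_sub_sub] using this
      rw [integral_mul_const, integral_sub hint' (hint a)]
      have hge : ∫ z, rho τ (X z - a) ∂μ ≤ ∫ z, rho τ (X z - a - ((n:ℝ)+1)⁻¹) ∂μ := by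
        have := hmono (a + ((n:ℝ)+1)⁻¹)
        simpa [sub_add_eq_sub_sub] using this
      have : (0:ℝ) ≤ (∫ z, rho τ (X z - a - ((n:ℝ)+1)⁻¹) ∂μ) - ∫ z, rho τ (X z - a) ∂μ := by
        linarith
      positivity
    have h0 := ge_of_tendsto' hlim hnonneg
    rw [hval] at h0
    linarith
  have key2 : (μ {z | X z < a}).toReal ≤ τ := by
    have hlim : Tendsto
        (fun n : ℕ => ∫ z, (rho τ (X z - a + ((n:ℝ)+1)⁻¹) - rho τ (X z - a)) * ((n:ℝ)+1) ∂μ)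
        atTop (nhds (∫ z, (τ - (if X z - a < 0 then (1:ℝ) else 0)) ∂μ)) := by
      refine tendsto_integral_of_dominated_convergence (fun _ => 1) ?_ (integrable_const 1) ?_ ?_
      · intro n
        exact (((hrhoM.comp ((hX.sub measurable_const).add measurable_const)).sub
          (hrhoM.comp (hX.sub measurable_const))).mul_const _).aestronglyMeasurable
      · intro n
        filter_upwards with z
        have hb := rho_abs_sub_le hτ0.le hτ1.le (X z - a + ((n:ℝ)+1)⁻¹) (X z - a)
        have he : |X z - a + ((n:ℝ)+1)⁻¹ - (X z - a)| = ((n:ℝ)+1)⁻¹ := by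
          rw [show X z - a + ((n:ℝ)+1)⁻¹ - (X z - a) = ((n:ℝ)+1)⁻¹ by ring,
            abs_of_pos (by positivity)]
        rw [he] at hb
        rw [Real.norm_eq_abs, abs_mul, abs_of_pos (show (0:ℝ) < (n:ℝ)+1 by positivity)]
        calc |rho τ (X z - a + ((n:ℝ)+1)⁻¹) - rho τ (X z - a)| * ((n:ℝ)+1)
            ≤ ((n:ℝ)+1)⁻¹ * ((n:ℝ)+1) := by
              exact mul_le_mul_of_nonneg_right hb (by positivity)
          _ = 1 := inv_mul_cancel₀ (by positivity)
      · filter_upwards with z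
        exact tendsto_left τ (X z - a)
    have hindicator : (fun z => τ - (if X z - a < 0 then (1:ℝ) else 0))
        = fun z => τ - Set.indicator {z | X z < a} (fun _ => (1:ℝ)) z := by
      funext z
      simp [Set.indicator_apply, Set.mem_setOf_eq, sub_neg]
    have hval : ∫ z, (τ - (if X z - a < 0 then (1:ℝ) else 0)) ∂μ
        = τ - (μ {z | X z < a}).toReal := by
      rw [hindicator, integral_sub (integrable_const τ)
        ((integrable_const (1:ℝ)).indicator hslt), integral_indicator_const (1:ℝ) hslt,
        integral_const]
      simp [Measure.real]
    have hnonneg : ∀ n : ℕ,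
        0 ≤ ∫ z, (rho τ (X z - a + ((n:ℝ)+1)⁻¹) - rho τ (X z - a)) * ((n:ℝ)+1) ∂μ := by
      intro n
      have harg : (fun z => rho τ (X z - (a - ((n:ℝ)+1)⁻¹)))
          = fun z => rho τ (X z - a + ((n:ℝ)+1)⁻¹) := by
        funext z; congr 1; ring
      have hint' : Integrable (fun z => rho τ (X z - a + ((n:ℝ)+1)⁻¹)) μ :=
        harg ▸ hint (a - ((n:ℝ)+1)⁻¹)
      rw [integral_mul_const, integral_sub hint' (hint a)]
      have hge : ∫ z, rho τ (X z - a) ∂μ ≤ ∫ z, rho τ (X z - a + ((n:ℝ)+1)⁻¹) ∂μ := by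
        have := hmono (a - ((n:ℝ)+1)⁻¹)
        rw [harg] at this
        exact this
      have : (0:ℝ) ≤ (∫ z, rho τ (X z - a + ((n:ℝ)+1)⁻¹) ∂μ) - ∫ z, rho τ (X z - a) ∂μ := by
        linarith
      positivity
    have h0 := ge_of_tendsto' hlim hnonneg
    rw [hval] at h0
    linarith
  have huu : u ⬝ᵥ u = 1 := by
    simpa [dotProduct, sq] using hu
  have hcu : c ⬝ᵥ u = 1 := by
    have h2 : (Γ *ᵥ b) ⬝ᵥ u = 0 := by
      rw [dotProduct_comm, dotProduct_mulVec, ← Matrix.mulVec_transpose, hΓu,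
        zero_dotProduct]
    rw [hcdef, sub_dotProduct, huu, h2, sub_zero]
  let φ : (Fin (k+1) → ℝ) →ₗ[ℝ] ℝ :=
    { toFun := fun z => c ⬝ᵥ z
      map_add' := fun x y => dotProduct_add c x y
      map_smul' := fun r x => by simp [dotProduct_smul] }
  have hker : LinearMap.ker φ ≠ ⊤ := by
    intro h
    have hu0 : φ u = 0 := by
      have : u ∈ LinearMap.ker φ := by rw [h]; trivial
      exact this
    rw [show φ u = c ⬝ᵥ u from rfl, hcu] at hu0
    exact one_ne_zero hu0
  have hzero : μ {z | X z = a} = 0 := by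
    have hac : μ ≪ volume := hμ ▸ withDensity_absolutelyContinuous volume _
    refine hac ?_
    have hset : {z : Fin (k+1) → ℝ | X z = a}
        = (a • u) +ᵥ (↑(LinearMap.ker φ) : Set (Fin (k+1) → ℝ)) := by
      ext z
      rw [Set.mem_vadd_set_iff_neg_vadd_mem]
      simp only [vadd_eq_add, SetLike.mem_coe, LinearMap.mem_ker, Set.mem_setOf_eq]
      have hφ : φ (-(a • u) + z) = c ⬝ᵥ z - a := by
        show c ⬝ᵥ (-(a • u) + z) = c ⬝ᵥ z - a
        rw [dotProduct_add, dotProduct_neg, dotProduct_smul, hcu, smul_eq_mul,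
          mul_one]
        ring
      rw [hφ, hXc z, sub_eq_zero]
    rw [hset, measure_vadd]
    exact Measure.addHaar_submodule volume _ hker
  have hle : μ {z | X z ≤ a} ≤ μ {z | X z < a} := by
    have hsub : {z | X z ≤ a} ⊆ {z | X z < a} ∪ {z | X z = a} := by
      intro z hz
      rcases lt_or_eq_of_le (show X z ≤ a from hz) with h | h
      · exact Or.inl h
      · exact Or.inr h
    calc μ {z | X z ≤ a} ≤ μ ({z | X z < a} ∪ {z | X z = a}) := measure_mono hsub
      _ ≤ μ {z | X z < a} + μ {z | X z = a} := measure_union_le _ _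
      _ = μ {z | X z < a} := by rw [hzero, add_zero]
  have h2 : (μ {z | X z ≤ a}).toReal ≤ (μ {z | X z < a}).toReal :=
    ENNReal.toReal_mono (measure_ne_top μ _) hle
  have hgoalset : {z : Fin (k+1) → ℝ | u ⬝ᵥ z < b ⬝ᵥ (Γᵀ *ᵥ z) + a} = {z | X z < a} := by
    ext z
    simp only [Set.mem_setOf_eq, hXdef, sub_lt_iff_lt_add]
    constructor <;> intro h <;> linarith
  rw [hgoalset]
  linarith
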